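/- Let P be an N-element poset, let x ∈ P, and let X = {y ∈ P : y <_P x}. Suppose that every element of P that is comparable with some element of X is also comparable with x. If L and L̃ are labelings of P with L|_{P∖X} = L̃|_{P∖X}, then for every integer γ ≥ 0 the label sets ∂^γ(L)(X) and ∂^γ(L̃)(X) are equal; that is, the set ∂^γ(L)(X) depends only on the set L(X) and the restriction L|_{P∖X}, not on how the labels in L(X) are distributed among the elements of X. -/

import Mathlib

open scoped Classical

noncomputable section

abbrev Labeling (P : Type*) [Fintype P] : Type _ := P ≃ Fin (Fintype.card P)

variable {P : Type*} [Fintype P] [PartialOrder P]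

def IsLinearExt (L : Labeling P) : Prop := ∀ x y : P, x ≤ y → L x ≤ L y

def lSucc (L : Labeling P) (v : P)
    (h : (Finset.univ.filter fun y => v < y).Nonempty) : P :=
  L.symm (((Finset.univ.filter fun y => v < y).image L).min' (h.image _))

lemma lt_lSucc (L : Labeling P) (v : P)
    (h : (Finset.univ.filter fun y => v < y).Nonempty) : v < lSucc L v h := by
  have hmem := Finset.min'_mem ((Finset.univ.filter fun y => v < y).image L) (h.image _)
  obtain ⟨y, hy, hLy⟩ := Finset.mem_image.mp hmem
  have heq : lSucc L v h = y := by
    unfold lSucc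
    rw [← hLy, Equiv.symm_apply_apply]
  rw [heq]
  exact (Finset.mem_filter.mp hy).2

def promChainFrom (L : Labeling P) (v : P) : List P :=
  if h : (Finset.univ.filter fun y => v < y).Nonempty then
    v :: promChainFrom L (lSucc L v h)
  else [v]
termination_by (Finset.univ.filter fun y => v < y).card
decreasing_by
  apply Finset.card_lt_card
  refine (Finset.ssubset_iff_of_subset ?_).mpr ?_
  · intro z hz
    simp only [Finset.mem_filter, Finset.mem_univ, true_and] at *
    exact lt_trans (lt_lSucc L v h) hz
  · exact ⟨lSucc L v h, by simp [lt_lSucc L v h], by simp⟩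

def promote (L : Labeling P) : Labeling P :=
  if h : Nonempty P then
    ((List.formPerm (promChainFrom L (L.symm ⟨0, @Fintype.card_pos P _ h⟩))).trans L).trans
      (finRotate (Fintype.card P)).symm
  else L

/-- The label of `x` under `L`, as an integer in `{1, …, n}`. -/
def labelOf (L : Labeling P) (x : P) : ℕ := (L x : ℕ) + 1

/-- The largest `a ∈ {0, …, n}` such that for all `j ∈ {n−a+1, …, n}`, the set
`{x ∈ P : j ≤ L(x) ≤ n}` is an upper order ideal of `P`. -/
def frozenA (L : Labeling P) : ℕ :=
  sSup {a : ℕ | a ≤ Fintype.card P ∧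
    ∀ j, Fintype.card P - a + 1 ≤ j → j ≤ Fintype.card P →
      IsUpperSet {x : P | j ≤ labelOf L x ∧ labelOf L x ≤ Fintype.card P}}

/-- `x` is frozen with respect to `L` if `n − a + 1 ≤ L(x) ≤ n`, where `a` is as in `frozenA`. -/
def IsFrozen (L : Labeling P) (x : P) : Prop :=
  Fintype.card P - frozenA L + 1 ≤ labelOf L x

/-- A labeling of an `n`-element poset is tangled if `n ≥ 2` and `∂^{n−2}(L)` is
not a linear extension. -/
def IsTangled (L : Labeling P) : Prop :=
  2 ≤ Fintype.card P ∧ ¬ IsLinearExt (promote^[Fintype.card P - 2] L)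

/-- A labeling of an `n`-element poset is `k`-untangled if `n ≥ k + 2` and
`∂^{n−k−2}(L)` is not a linear extension. -/
def IsUntangled (k : ℕ) (L : Labeling P) : Prop :=
  k + 2 ≤ Fintype.card P ∧ ¬ IsLinearExt (promote^[Fintype.card P - k - 2] L)

/-- The comparability graph of a poset. -/
def compGraph (P : Type*) [PartialOrder P] : SimpleGraph P where
  Adj x y := x ≠ y ∧ (x ≤ y ∨ y ≤ x)
  symm := by
    constructor
    intro x y hxy
    exact ⟨hxy.1.symm, hxy.2.symm⟩
  loopless := by
    constructor
    intro x hx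
    exact hx.1 rfl

/-- The standardization of an injective map from a finite type into a linear order:
the unique relabeling by `{1, …, n}` with the same relative order of values. -/
def standardize {R β : Type*} [Fintype R] [LinearOrder β]
    (f : R → β) (hf : Function.Injective f) : R ≃ Fin (Fintype.card R) :=
  have hcard : (Finset.univ.image f).card = Fintype.card R := by
    rw [Finset.card_image_of_injective _ hf, Finset.card_univ]
  (Equiv.ofBijective (fun x => (⟨f x, by simp⟩ : ↥(Finset.univ.image f)))
    (by
      rw [Fintype.bijective_iff_injective_and_card]
      refine ⟨fun a b hab => hf (congrArg Subtype.val hab), ?_⟩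
      rw [Fintype.card_coe, hcard])).trans
    ((Finset.univ.image f).orderIsoOfFin hcard).symm.toEquiv

/-- The toggle operator `τ_{k+1}`: it swaps the labels `k+1` and `k+2` (i.e. the
`Fin`-labels `k` and `k+1`) unless `L⁻¹(k+1) <_P L⁻¹(k+2)`. -/
def toggle (L : Labeling P) (k : ℕ) : Labeling P :=
  if h : k + 1 < Fintype.card P then
    if L.symm ⟨k, Nat.lt_of_succ_lt h⟩ < L.symm ⟨k + 1, h⟩ then L
    else L.trans (Equiv.swap ⟨k, Nat.lt_of_succ_lt h⟩ ⟨k + 1, h⟩)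
  else L

/-- An element `x` is `L`-golden if every element strictly above it has a larger label. -/
def IsGolden (L : Labeling P) (x : P) : Prop := ∀ y : P, x < y → L x < L y

/-- The largest label `n` of an `n`-element poset, as an element of `Fin n`. -/
def topFin (P : Type*) [Fintype P] [Nonempty P] : Fin (Fintype.card P) :=
  ⟨Fintype.card P - 1, Nat.sub_lt Fintype.card_pos Nat.one_pos⟩
-- auxiliary lemmas
lemma card_above_lSucc_lt (L : Labeling P) (v : P)
    (h : (Finset.univ.filter fun y => v < y).Nonempty) :
    (Finset.univ.filter fun y => lSucc L v h < y).card <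
      (Finset.univ.filter fun y => v < y).card := by
  apply Finset.card_lt_card
  refine (Finset.ssubset_iff_of_subset ?_).mpr ?_
  · intro z hz
    simp only [Finset.mem_filter, Finset.mem_univ, true_and] at *
    exact lt_trans (lt_lSucc L v h) hz
  · exact ⟨lSucc L v h, by simp [lt_lSucc L v h], by simp⟩

lemma chain_cons (L : Labeling P) (v : P) :
    ∃ t, promChainFrom L v = v :: t := by
  rw [promChainFrom]
  split
  · exact ⟨_, rfl⟩
  · exact ⟨[], rfl⟩

lemma mem_chain_le (L : Labeling P) (v : P) :
    ∀ w ∈ promChainFrom L v, v ≤ w := by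
  rw [promChainFrom]
  split
  case isTrue h =>
    intro w hw
    rcases List.mem_cons.mp hw with rfl | hw
    · exact le_refl _
    · exact le_of_lt (lt_of_lt_of_le (lt_lSucc L v h)
        (mem_chain_le L (lSucc L v h) w hw))
  case isFalse h => simp
termination_by (Finset.univ.filter fun y => v < y).card
decreasing_by exact card_above_lSucc_lt L v (by assumption)

lemma chain_sorted (L : Labeling P) (v : P) :
    (promChainFrom L v).Pairwise (· < ·) := by
  rw [promChainFrom]
  split
  case isTrue h =>
    rw [List.pairwise_cons]
    refine ⟨fun b hb => lt_of_lt_of_le (lt_lSucc L v h)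
      (mem_chain_le L (lSucc L v h) b hb), chain_sorted L (lSucc L v h)⟩
  case isFalse h => simp
termination_by (Finset.univ.filter fun y => v < y).card
decreasing_by exact card_above_lSucc_lt L v (by assumption)

lemma chain_nodup (L : Labeling P) (v : P) :
    (promChainFrom L v).Nodup :=
  (chain_sorted L v).imp (fun h => ne_of_lt h)

lemma symm_min_mem (L : Labeling P) (s : Finset P) (hs : s.Nonempty) :
    L.symm ((s.image L).min' (hs.image L)) ∈ s := by
  have hmem := Finset.min'_mem (s.image L) (hs.image L)
  obtain ⟨y, hy, hLy⟩ := Finset.mem_image.mp hmem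
  rw [← hLy, Equiv.symm_apply_apply]
  exact hy

lemma symm_min_congr (L L' : Labeling P) (s : Finset P) (hs : s.Nonempty)
    (h : ∀ z ∈ s, L z = L' z) :
    L.symm ((s.image L).min' (hs.image L)) = L'.symm ((s.image L').min' (hs.image L')) := by
  have himg : s.image L = s.image L' := Finset.image_congr (fun z hz => h z hz)
  have hmin : (s.image L).min' (hs.image L) = (s.image L').min' (hs.image L') := by
    apply le_antisymm
    · exact Finset.min'_le _ _ (by rw [himg]; exact Finset.min'_mem _ _)
    · exact Finset.min'_le _ _ (by rw [← himg]; exact Finset.min'_mem _ _)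
  have hm := symm_min_mem L s hs
  rw [← hmin]
  symm
  rw [Equiv.symm_apply_eq, ← h _ hm, Equiv.apply_symm_apply]

lemma upSet_nonempty (x : P) : (Finset.univ.filter fun z => x ≤ z).Nonempty :=
  ⟨x, Finset.mem_filter.mpr ⟨Finset.mem_univ x, le_refl x⟩⟩

def wstar (L : Labeling P) (x : P) : P :=
  L.symm (((Finset.univ.filter fun z => x ≤ z).image L).min' ((upSet_nonempty x).image L))

lemma le_wstar (L : Labeling P) (x : P) : x ≤ wstar L x := by
  have := symm_min_mem L (Finset.univ.filter fun z => x ≤ z) (upSet_nonempty x)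
  exact (Finset.mem_filter.mp this).2

lemma chain_outside (x : P) (L L' : Labeling P)
    (hagree : ∀ z : P, ¬ z < x → L z = L' z) (v : P) (hv : ¬ v < x) :
    promChainFrom L v = promChainFrom L' v ∧ ∀ w ∈ promChainFrom L v, ¬ w < x := by
  rw [promChainFrom, promChainFrom]
  by_cases h : (Finset.univ.filter fun y => v < y).Nonempty
  · rw [dif_pos h, dif_pos h]
    have hs : lSucc L v h = lSucc L' v h := by
      unfold lSucc
      exact symm_min_congr L L' _ h (fun z hz => hagree z
        (fun hzx => hv (lt_trans (Finset.mem_filter.mp hz).2 hzx)))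
    have hsX : ¬ lSucc L v h < x := fun hlt => hv (lt_trans (lt_lSucc L v h) hlt)
    obtain ⟨ih1, ih2⟩ := chain_outside x L L' hagree (lSucc L v h) hsX
    refine ⟨by rw [← hs, ih1], ?_⟩
    intro w hw
    rcases List.mem_cons.mp hw with rfl | hw
    · exact hv
    · exact ih2 w hw
  · rw [dif_neg h, dif_neg h]
    refine ⟨rfl, ?_⟩
    intro w hw
    rcases List.mem_cons.mp hw with rfl | hw
    · exact hv
    · simp at hw
termination_by (Finset.univ.filter fun y => v < y).card
decreasing_by exact card_above_lSucc_lt L v (by assumption)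

lemma chain_inside (x : P) (L : Labeling P)
    (hcomp : ∀ z : P, (∃ w, w < x ∧ (z ≤ w ∨ w ≤ z)) → (z ≤ x ∨ x ≤ z))
    (v : P) (hv : v < x) :
    ∃ A : List P, A ≠ [] ∧ (∀ a ∈ A, a < x) ∧
      promChainFrom L v = A ++ promChainFrom L (wstar L x) := by
  have h : (Finset.univ.filter fun y => v < y).Nonempty :=
    ⟨x, Finset.mem_filter.mpr ⟨Finset.mem_univ x, hv⟩⟩
  rw [promChainFrom, dif_pos h]
  by_cases hs : lSucc L v h < x
  · obtain ⟨A, hne, hA, hrec⟩ := chain_inside x L hcomp (lSucc L v h) hs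
    refine ⟨v :: A, List.cons_ne_nil _ _, ?_, by rw [hrec, List.cons_append]⟩
    intro a ha
    rcases List.mem_cons.mp ha with rfl | ha
    · exact hv
    · exact hA a ha
  · have hvs : v < lSucc L v h := lt_lSucc L v h
    have hxs : x ≤ lSucc L v h := by
      rcases hcomp (lSucc L v h) ⟨v, hv, Or.inr (le_of_lt hvs)⟩ with h1 | h2
      · rcases lt_or_eq_of_le h1 with h1 | h1
        · exact absurd h1 hs
        · exact le_of_eq h1.symm
      · exact h2
    have heq : lSucc L v h = wstar L x := by
      apply L.injective
      have e1 : L (lSucc L v h) =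
          (((Finset.univ.filter fun y => v < y).image L).min' (h.image L)) := by
        unfold lSucc; exact L.apply_symm_apply _
      have e2 : L (wstar L x) =
          (((Finset.univ.filter fun z => x ≤ z).image L).min' ((upSet_nonempty x).image L)) := by
        unfold wstar; exact L.apply_symm_apply _
      rw [e1, e2]
      apply le_antisymm
      · rw [← e2]
        exact Finset.min'_le _ _ (Finset.mem_image_of_mem _
          (Finset.mem_filter.mpr ⟨Finset.mem_univ _, lt_of_lt_of_le hv (le_wstar L x)⟩))
      · rw [← e1]
        exact Finset.min'_le _ _ (Finset.mem_image_of_mem _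
          (Finset.mem_filter.mpr ⟨Finset.mem_univ _, hxs⟩))
    refine ⟨[v], List.cons_ne_nil _ _, ?_, by rw [heq]; rfl⟩
    intro a ha
    rcases List.mem_cons.mp ha with rfl | ha
    · exact hv
    · simp at ha
termination_by (Finset.univ.filter fun y => v < y).card
decreasing_by exact card_above_lSucc_lt L v (by assumption)

lemma formPerm_append_mid {α : Type*} [DecidableEq α] (A C : List α)
    (hnd : (A ++ C).Nodup) (j : ℕ) (hj : j + 1 < C.length) :
    (A ++ C).formPerm (C[j]'(by omega)) = C[j + 1] := by
  have h1 : (A ++ C)[A.length + j]'(by simp; omega) = C[j]'(by omega) := by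
    rw [List.getElem_append_right (by omega)]
    exact getElem_congr_idx (by omega)
  rw [← h1, List.formPerm_apply_getElem _ hnd]
  have hmod : (A.length + j + 1) % (A ++ C).length = A.length + (j + 1) := by
    rw [List.length_append, Nat.mod_eq_of_lt (by omega)]
    omega
  rw [getElem_congr_idx hmod, List.getElem_append_right (by omega)]
  exact getElem_congr_idx (by omega)

lemma formPerm_append_last {α : Type*} [DecidableEq α] (A C : List α)
    (hnd : (A ++ C).Nodup) (j : ℕ) (hjl : j < C.length) (hj : j + 1 = C.length) :
    (A ++ C).formPerm (C[j]'hjl) = (A ++ C)[0]'(by simp; omega) := by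
  have h1 : (A ++ C)[A.length + j]'(by simp; omega) = C[j]'hjl := by
    rw [List.getElem_append_right (by omega)]
    exact getElem_congr_idx (by omega)
  rw [← h1, List.formPerm_apply_getElem _ hnd]
  have hmod : (A.length + j + 1) % (A ++ C).length = 0 := by
    rw [List.length_append]
    have : A.length + j + 1 = A.length + C.length := by omega
    rw [this, Nat.mod_self]
  exact getElem_congr_idx hmod

lemma agree_symm_notX (x : P) (L L' : Labeling P)
    (hagree : ∀ z : P, ¬ z < x → L z = L' z) (m : Fin (Fintype.card P))
    (h : ¬ L.symm m < x) : L'.symm m = L.symm m := by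
  rw [Equiv.symm_apply_eq, ← hagree _ h, Equiv.apply_symm_apply]

lemma formPerm_label_agree (x : P) (L L' : Labeling P)
    (hcomp : ∀ z : P, (∃ w, w < x ∧ (z ≤ w ∨ w ≤ z)) → (z ≤ x ∨ x ≤ z))
    (hagree : ∀ z : P, ¬ z < x → L z = L' z) (i0 : Fin (Fintype.card P))
    (z : P) (hz : ¬ z < x) :
    L ((promChainFrom L (L.symm i0)).formPerm z) =
      L' ((promChainFrom L' (L'.symm i0)).formPerm z) := by
  have hagree' : ∀ w : P, ¬ w < x → L' w = L w := fun w hw => (hagree w hw).symm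
  by_cases h0 : L.symm i0 < x
  · have h0' : L'.symm i0 < x := by
      by_contra hc
      exact hc (agree_symm_notX x L' L hagree' i0 hc ▸ h0)
    obtain ⟨A, hAne, hAX, hAeq⟩ := chain_inside x L hcomp _ h0
    obtain ⟨A', hAne', hAX', hAeq'⟩ := chain_inside x L' hcomp _ h0'
    have hwq : wstar L x = wstar L' x := by
      unfold wstar
      exact symm_min_congr L L' _ (upSet_nonempty x)
        (fun w hw => hagree w (fun hwx =>
          absurd (lt_of_le_of_lt (Finset.mem_filter.mp hw).2 hwx) (lt_irrefl x)))
    have hwX : ¬ wstar L x < x :=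
      fun hlt => absurd (lt_of_le_of_lt (le_wstar L x) hlt) (lt_irrefl x)
    obtain ⟨hCeq, hCX⟩ := chain_outside x L L' hagree (wstar L x) hwX
    set C := promChainFrom L (wstar L x) with hC
    have hC' : C = promChainFrom L' (wstar L' x) := by rw [hCeq, hwq]
    rw [hAeq, hAeq', ← hC']
    have hnd : (A ++ C).Nodup := by rw [← hAeq]; exact chain_nodup L _
    have hnd' : (A' ++ C).Nodup := by rw [hC', ← hAeq']; exact chain_nodup L' _
    by_cases hzC : z ∈ C
    · obtain ⟨j, hjl, hje⟩ := List.mem_iff_getElem.mp hzC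
      rw [← hje]
      by_cases hlast : j + 1 < C.length
      · rw [formPerm_append_mid A C hnd j hlast, formPerm_append_mid A' C hnd' j hlast]
        exact hagree _ (hCX _ (List.getElem_mem _))
      · have hj1 : j + 1 = C.length := by omega
        rw [formPerm_append_last A C hnd j hjl hj1, formPerm_append_last A' C hnd' j hjl hj1]
        have e1 : (A ++ C)[0]'(by simp; omega) = L.symm i0 := by
          obtain ⟨t, ht⟩ := chain_cons L (L.symm i0)
          rw [getElem_congr_coll hAeq.symm, getElem_congr_coll ht]
          rfl
        have e2 : (A' ++ C)[0]'(by simp; omega) = L'.symm i0 := by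
          obtain ⟨t, ht⟩ := chain_cons L' (L'.symm i0)
          rw [getElem_congr_coll (hC' ▸ hAeq'.symm : A' ++ C = promChainFrom L' (L'.symm i0)),
            getElem_congr_coll ht]
          rfl
        rw [e1, e2, Equiv.apply_symm_apply, Equiv.apply_symm_apply]
    · have hz1 : z ∉ A ++ C := by
        intro hmem
        rcases List.mem_append.mp hmem with hA | hC2
        · exact hz (hAX z hA)
        · exact hzC hC2
      have hz2 : z ∉ A' ++ C := by
        intro hmem
        rcases List.mem_append.mp hmem with hA | hC2
        · exact hz (hAX' z hA)
        · exact hzC hC2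
      rw [List.formPerm_apply_of_notMem hz1, List.formPerm_apply_of_notMem hz2]
      exact hagree z hz
  · have h0' : L'.symm i0 = L.symm i0 := agree_symm_notX x L L' hagree i0 h0
    obtain ⟨hceq, hcX⟩ := chain_outside x L L' hagree _ h0
    rw [h0', ← hceq]
    by_cases hm : z ∈ promChainFrom L (L.symm i0)
    · exact hagree _ (hcX _ (List.formPerm_apply_mem_of_mem hm))
    · rw [List.formPerm_apply_of_notMem hm]
      exact hagree z hz

lemma promote_agree (x : P) (L L' : Labeling P)
    (hcomp : ∀ z : P, (∃ w, w < x ∧ (z ≤ w ∨ w ≤ z)) → (z ≤ x ∨ x ≤ z))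
    (hagree : ∀ z : P, ¬ z < x → L z = L' z) (z : P) (hz : ¬ z < x) :
    promote L z = promote L' z := by
  have hne : Nonempty P := ⟨x⟩
  unfold promote
  rw [dif_pos hne, dif_pos hne]
  simp only [Equiv.trans_apply]
  congr 1
  exact formPerm_label_agree x L L' hcomp hagree _ z hz

lemma image_eq_of_agree (F G : Labeling P) (X : Set P)
    (h : ∀ z ∉ X, F z = G z) : F '' X = G '' X := by
  have h1 : ∀ (F G : Labeling P), (∀ z ∉ X, F z = G z) →
      ∀ m : Fin (Fintype.card P), F.symm m ∉ X → G.symm m ∉ X := by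
    intro F G h m hF
    have : G.symm m = F.symm m := by
      rw [Equiv.symm_apply_eq, ← h _ hF, Equiv.apply_symm_apply]
    rwa [this]
  ext m
  have h2 : F.symm m ∈ X ↔ G.symm m ∈ X := by
    constructor
    · intro hx
      by_contra hc
      exact (h1 G F (fun z hz => (h z hz).symm) m hc) hx
    · intro hx
      by_contra hc
      exact (h1 F G h m hc) hx
  simp only [Set.mem_image]
  constructor
  · rintro ⟨y, hy, rfl⟩
    refine ⟨G.symm (F y), ?_, Equiv.apply_symm_apply _ _⟩
    have : F.symm (F y) ∈ X := by rwa [Equiv.symm_apply_apply]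
    exact h2.mp this
  · rintro ⟨y, hy, rfl⟩
    refine ⟨F.symm (G y), ?_, Equiv.apply_symm_apply _ _⟩
    have : G.symm (G y) ∈ X := by rwa [Equiv.symm_apply_apply]
    exact h2.mpr this

/-- Let `X = {y : y <_P x}` and suppose every element comparable with
some element of `X` is comparable with `x`.  If two labelings agree on `P ∖ X`,
then for every `γ ≥ 0` the label sets `∂^γ(L)(X)` and `∂^γ(L̃)(X)` coincide:
the set `∂^γ(L)(X)` does not depend on how the labels in `L(X)` are distributed
among the elements of `X`. -/
theorem promote_image_of_ideal_eq (x : P) (X : Set P) (hX : X = {y : P | y < x})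
    (hcomp : ∀ z : P, (∃ w ∈ X, z ≤ w ∨ w ≤ z) → (z ≤ x ∨ x ≤ z))
    (L L' : Labeling P) (hagree : ∀ z ∉ X, L z = L' z) (γ : ℕ) :
    (promote^[γ] L) '' X = (promote^[γ] L') '' X := by
  subst hX
  have hcomp' : ∀ z : P, (∃ w, w < x ∧ (z ≤ w ∨ w ≤ z)) → (z ≤ x ∨ x ≤ z) :=
    fun z ⟨w, h1, h2⟩ => hcomp z ⟨w, h1, h2⟩
  have key : ∀ z : P, ¬ z < x → (promote^[γ] L) z = (promote^[γ] L') z := by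
    induction γ with
    | zero => exact fun z hz => hagree z hz
    | succ n ih =>
      intro z hz
      rw [Function.iterate_succ_apply', Function.iterate_succ_apply']
      exact promote_agree x _ _ hcomp' ih z hz
  exact image_eq_of_agree _ _ _ (fun z hz => key z hz)

end
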